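/- arXiv:2212.12680 — 2 statements merged into one kernel-verified Lean document; each statement's English description precedes it below -/
import Mathlib

section
/- Let X be a locally finite weighted graph, V ≥ 0 and f > 0 on X. Then the weighted Hardy inequality ∑_x V(x)|∇u|²(x) ≥ ∑_x (−div(V∇f)(x)/f(x)) u(x)² holds for all finitely supported u on X. -/
/-- Pointwise squared gradient `|∇u|²(x) = (1/2)∑_y b(x,y)(u(x) − u(y))²`. -/
noncomputable def graphGradSq {X : Type*} (b : X → X → ℝ) (u : X → ℝ) (x : X) : ℝ :=
  (1 / 2) * ∑' y, b x y * (u x - u y) ^ 2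

/-- Divergence of `F : X × X → ℝ`: `div F(x) = (1/2)∑_y b(x,y)(F(y,x) − F(x,y))`. -/
noncomputable def graphDiv {X : Type*} (b : X → X → ℝ) (F : X → X → ℝ) (x : X) : ℝ :=
  (1 / 2) * ∑' y, b x y * (F y x - F x y)

lemma hardy_key (s t a c : ℝ) (hs : 0 < s) (ht : 0 < t) :
    (s - t) * (a ^ 2 / s - c ^ 2 / t) ≤ (a - c) ^ 2 := by
  rw [div_sub_div _ _ hs.ne' ht.ne', ← mul_div_assoc, div_le_iff₀ (by positivity)]
  nlinarith [sq_nonneg (t * a - s * c)]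

/-- Weighted Hardy inequality on a locally finite graph with `V ≥ 0`, `f > 0`. -/
theorem graph_weighted_hardy {X : Type*} (b : X → X → ℝ)
    (hsym : ∀ x y, b x y = b y x) (hnonneg : ∀ x y, 0 ≤ b x y)
    (hdiag : ∀ x, b x x = 0) (hlf : ∀ x, {y | b x y ≠ 0}.Finite)
    (V f u : X → ℝ) (hV : ∀ x, 0 ≤ V x) (hf : ∀ x, 0 < f x)
    (hu : (Function.support u).Finite) :
    ∑' x, V x * graphGradSq b u x ≥
      ∑' x, (-(graphDiv b (fun x y => V x * (f x - f y)) x) / f x) * (u x) ^ 2 := by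
  classical
  set S : Finset X := hu.toFinset with hS
  set N : X → Finset X := fun x => (hlf x).toFinset with hN
  have hmemS : ∀ x, x ∈ S ↔ u x ≠ 0 := by
    intro x; simp [hS, Set.Finite.mem_toFinset, Function.mem_support]
  have hmemN : ∀ x y, y ∈ N x ↔ b x y ≠ 0 := by
    intro x y; simp [hN, Set.Finite.mem_toFinset]
  set T : Finset X := S ∪ S.biUnion N with hT
  set W : Finset X := T ∪ T.biUnion N with hW
  have hTW : T ⊆ W := Finset.subset_union_left
  have hST : S ⊆ T := Finset.subset_union_left
  -- if u y ≠ 0 and b x y ≠ 0 then x ∈ T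
  have k1 : ∀ x y, u y ≠ 0 → b x y ≠ 0 → x ∈ T := by
    intro x y hy hb
    refine Finset.mem_union_right _ (Finset.mem_biUnion.2 ⟨y, (hmemS y).2 hy, ?_⟩)
    rw [hmemN]; rw [← hsym]; exact hb
  have k2 : ∀ x ∈ T, N x ⊆ W := by
    intro x hx
    exact fun y hy => Finset.mem_union_right _ (Finset.mem_biUnion.2 ⟨x, hx, hy⟩)
  -- outside T, every gradient term vanishes
  have k3 : ∀ x, x ∉ T → ∀ y, b x y * (u x - u y) ^ 2 = 0 := by
    intro x hx y
    by_cases hb : b x y = 0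
    · simp [hb]
    · have hy : u y = 0 := by
        by_contra hy; exact hx (k1 x y hy hb)
      have hx0 : u x = 0 := by
        by_contra hx0; exact hx (hST ((hmemS x).2 hx0))
      simp [hy, hx0]
  -- LHS reduction
  have hL1 : (∑' x, V x * graphGradSq b u x)
      = ∑ x ∈ W, V x * ((1 / 2) * ∑ y ∈ W, b x y * (u x - u y) ^ 2) := by
    rw [tsum_eq_sum (s := W) ?_]
    · apply Finset.sum_congr rfl
      intro x _
      by_cases hx : x ∈ T
      · congr 1
        unfold graphGradSq
        congr 1
        rw [tsum_eq_sum (s := N x) ?_]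
        · exact Finset.sum_subset (k2 x hx) (fun y _ hy => by
            simp [not_not.1 (fun h => hy ((hmemN x y).2 h))])
        · intro y hy
          have : b x y = 0 := not_not.1 (fun h => hy ((hmemN x y).2 h))
          simp [this]
      · have h1 : graphGradSq b u x = 0 := by
          unfold graphGradSq
          rw [show (fun y => b x y * (u x - u y) ^ 2) = fun _ => (0:ℝ) from
            funext (k3 x hx)]
          simp
        rw [h1, Finset.sum_eq_zero (fun y _ => k3 x hx y)]
        ring
    · intro x hx
      have hxT : x ∉ T := fun h => hx (hTW h)
      have h1 : graphGradSq b u x = 0 := by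
        unfold graphGradSq
        rw [show (fun y => b x y * (u x - u y) ^ 2) = fun _ => (0:ℝ) from
          funext (k3 x hxT)]
        simp
      rw [h1, mul_zero]
  -- RHS reduction
  have hR1 : (∑' x, (-(graphDiv b (fun x y => V x * (f x - f y)) x) / f x) * (u x) ^ 2)
      = ∑ x ∈ W, (-((1 / 2) * ∑ y ∈ W,
          b x y * (V y * (f y - f x) - V x * (f x - f y))) / f x) * (u x) ^ 2 := by
    rw [tsum_eq_sum (s := W) ?_]
    · apply Finset.sum_congr rfl
      intro x _
      by_cases hx : u x = 0
      · simp [hx]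
      · have hxT : x ∈ T := hST ((hmemS x).2 hx)
        congr 3
        unfold graphDiv
        congr 1
        rw [tsum_eq_sum (s := N x) ?_]
        · exact Finset.sum_subset (k2 x hxT) (fun y _ hy => by
            simp [not_not.1 (fun h => hy ((hmemN x y).2 h))])
        · intro y hy
          have : b x y = 0 := not_not.1 (fun h => hy ((hmemN x y).2 h))
          simp [this]
    · intro x hx
      have : u x = 0 := by
        by_contra hx0; exact hx (hTW (hST ((hmemS x).2 hx0)))
      simp [this]
  rw [hL1, hR1, ge_iff_le]
  -- expand everything to double sums
  set p : X → X → ℝ := fun x y =>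
    (-((1 / 2) * (b x y * (V y * (f y - f x) - V x * (f x - f y)))) / f x) * (u x) ^ 2
    with hp
  set q : X → X → ℝ := fun x y =>
    V x * ((1 / 2) * (b x y * (u x - u y) ^ 2)) with hq
  have hLq : ∀ x, V x * ((1 / 2) * ∑ y ∈ W, b x y * (u x - u y) ^ 2)
      = ∑ y ∈ W, q x y := by
    intro x; rw [Finset.mul_sum, Finset.mul_sum]
  have hRp : ∀ x, (-((1 / 2) * ∑ y ∈ W,
      b x y * (V y * (f y - f x) - V x * (f x - f y))) / f x) * (u x) ^ 2
      = ∑ y ∈ W, p x y := by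
    intro x
    rw [Finset.mul_sum, ← Finset.sum_neg_distrib, Finset.sum_div, Finset.sum_mul]
  simp only [hLq, hRp]
  -- symmetrized pointwise inequality
  have hpt : ∀ x y, p x y + p y x ≤ q x y + q y x := by
    intro x y
    have hb := hnonneg x y
    have hkey := hardy_key (f x) (f y) (u x) (u y) (hf x) (hf y)
    have h2 : (1 / 2) * b x y * (V x + V y) * ((f x - f y) * (u x ^ 2 / f x - u y ^ 2 / f y))
        ≤ (1 / 2) * b x y * (V x + V y) * (u x - u y) ^ 2 :=
      mul_le_mul_of_nonneg_left hkey
        (mul_nonneg (mul_nonneg (by norm_num) hb) (add_nonneg (hV x) (hV y)))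
    have e1 : p x y + p y x
        = (1 / 2) * b x y * (V x + V y) * ((f x - f y) * (u x ^ 2 / f x - u y ^ 2 / f y)) := by
      simp only [hp]
      rw [← hsym x y]
      field_simp
      ring
    have e2 : q x y + q y x = (1 / 2) * b x y * (V x + V y) * (u x - u y) ^ 2 := by
      simp only [hq]
      rw [← hsym x y]
      ring
    rw [e1, e2]; exact h2
  have hsum : ∑ x ∈ W, ∑ y ∈ W, (p x y + p y x) ≤ ∑ x ∈ W, ∑ y ∈ W, (q x y + q y x) :=
    Finset.sum_le_sum (fun x _ => Finset.sum_le_sum (fun y _ => hpt x y))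
  have hcp : ∑ x ∈ W, ∑ y ∈ W, p y x = ∑ x ∈ W, ∑ y ∈ W, p x y := Finset.sum_comm
  have hcq : ∑ x ∈ W, ∑ y ∈ W, q y x = ∑ x ∈ W, ∑ y ∈ W, q x y := Finset.sum_comm
  simp only [Finset.sum_add_distrib] at hsum
  rw [hcp, hcq] at hsum
  linarith
end

section
/- For every finitely supported real sequence u with u_0 = u_1 = 0, the improved second-order inequality ∑_{n≥1} (Δu_n)² ≥ ∑_{n≥2} ( 9/(16 n⁴) + 15/(16 n⁵) ) u_n² holds, where Δu_n = 2u_n − u_{n+1} − u_{n-1}. -/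
/-- Rational weight approximating `√(n/(n+1))`. -/
private noncomputable def aa (n : ℕ) : ℝ := (4 * (n : ℝ) + 1) / (4 * (n : ℝ) + 3)

/-- Rational weight approximating `((n+1)/(n+2))^(3/2)`. -/
private noncomputable def bb (n : ℕ) : ℝ := (4 * (n : ℝ) + 3) / (4 * (n : ℝ) + 9)

/-- Intermediate Hardy weight. -/
private noncomputable def lam (n : ℕ) : ℝ := 4 / ((4 * (n : ℝ) + 3) * (4 * (n : ℝ) + 5))

private lemma aa_pos (n : ℕ) : 0 < aa n := by
  unfold aa; positivity

private lemma bb_pos (n : ℕ) : 0 < bb n := by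
  unfold bb; positivity

private lemma lam_nonneg (n : ℕ) : 0 ≤ lam n := by
  unfold lam; positivity

private lemma amgm (a x y : ℝ) (ha : 0 < a) :
    (1 - a) * x ^ 2 + (1 - a⁻¹) * y ^ 2 ≤ (x - y) ^ 2 := by
  have hne : a ≠ 0 := ha.ne'
  have h : (x - y) ^ 2 - ((1 - a) * x ^ 2 + (1 - a⁻¹) * y ^ 2) = (a * x - y) ^ 2 / a := by
    field_simp
    ring
  have h2 : 0 ≤ (a * x - y) ^ 2 / a := div_nonneg (sq_nonneg _) ha.le
  linarith

private lemma lam_eq (n : ℕ) : (1 - aa n) + (1 - (aa (n + 1))⁻¹) = lam n := by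
  unfold aa lam
  push_cast
  have h3 : (4 * (n : ℝ) + 3) ≠ 0 := by positivity
  have h5 : (4 * (n : ℝ) + 5) ≠ 0 := by positivity
  have h5' : (4 * ((n : ℝ) + 1) + 1) ≠ 0 := by positivity
  have h7 : (4 * ((n : ℝ) + 1) + 3) ≠ 0 := by positivity
  field_simp
  ring

/-- The final coefficient inequality: the produced weight dominates the target weight. -/
private lemma coef_ge (n : ℕ) :
    9 / (16 * ((n : ℝ) + 2) ^ 4) + 15 / (16 * ((n : ℝ) + 2) ^ 5) ≤
      lam n * (1 - bb n) + lam (n + 1) * (1 - (bb (n + 1))⁻¹) := by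
  unfold lam bb
  push_cast
  set x : ℝ := (n : ℝ) with hx_def
  have hx : (0 : ℝ) ≤ x := Nat.cast_nonneg n
  have key :
      (4 / ((4 * x + 3) * (4 * x + 5))) * (1 - (4 * x + 3) / (4 * x + 9)) +
          (4 / ((4 * (x + 1) + 3) * (4 * (x + 1) + 5))) *
            (1 - ((4 * (x + 1) + 3) / (4 * (x + 1) + 9))⁻¹) -
        (9 / (16 * (x + 2) ^ 4) + 15 / (16 * (x + 2) ^ 5)) =
      (21888 * (x + 2) ^ 4 - 20256 * (x + 2) ^ 3 + 2268 * (x + 2) ^ 2 + 1245 * (x + 2) - 225) /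
        (16 * (x + 2) ^ 5 * ((4 * x + 3) * (4 * x + 5) * (4 * x + 9) * (4 * x + 7) ^ 2)) := by
    have e1 : 4 * (x + 1) + 3 = 4 * x + 7 := by ring
    have e2 : 4 * (x + 1) + 5 = 4 * x + 9 := by ring
    have e3 : 4 * (x + 1) + 9 = 4 * x + 13 := by ring
    rw [e1, e2, e3]
    have h2' : (x + 2) ≠ 0 := by positivity
    have h3' : (4 * x + 3) ≠ 0 := by positivity
    have h5' : (4 * x + 5) ≠ 0 := by positivity
    have h7' : (4 * x + 7) ≠ 0 := by positivity
    have h9' : (4 * x + 9) ≠ 0 := by positivity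
    have h13' : (4 * x + 13) ≠ 0 := by positivity
    field_simp
    ring
  have hnum : 0 ≤ 21888 * (x + 2) ^ 4 - 20256 * (x + 2) ^ 3 + 2268 * (x + 2) ^ 2 +
      1245 * (x + 2) - 225 := by
    nlinarith [pow_nonneg hx 2, pow_nonneg hx 3, pow_nonneg hx 4, hx]
  have hden : 0 < 16 * (x + 2) ^ 5 *
      ((4 * x + 3) * (4 * x + 5) * (4 * x + 9) * (4 * x + 7) ^ 2) := by
    have h7' : (0:ℝ) < 4 * x + 7 := by linarith
    have h2' : (0:ℝ) < x + 2 := by linarith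
    positivity
  have hfrac : 0 ≤ (21888 * (x + 2) ^ 4 - 20256 * (x + 2) ^ 3 + 2268 * (x + 2) ^ 2 +
        1245 * (x + 2) - 225) /
      (16 * (x + 2) ^ 5 * ((4 * x + 3) * (4 * x + 5) * (4 * x + 9) * (4 * x + 7) ^ 2)) :=
    div_nonneg hnum hden.le
  linarith [key, hfrac]

/-- Regrouping identity for the first (Rellich→Hardy) step. -/
private lemma stepA_regroup (u : ℕ → ℝ) (M : ℕ) :
    ∑ n ∈ Finset.range (M + 1),
        ((1 - aa n) * (u (n + 2) - u (n + 1)) ^ 2 +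
          (1 - (aa n)⁻¹) * (u (n + 1) - u n) ^ 2) =
      (∑ n ∈ Finset.range M, lam n * (u (n + 2) - u (n + 1)) ^ 2) +
        (1 - aa M) * (u (M + 2) - u (M + 1)) ^ 2 +
        (1 - (aa 0)⁻¹) * (u 1 - u 0) ^ 2 := by
  induction M with
  | zero => simp [Finset.sum_range_one]
  | succ M ih =>
      rw [Finset.sum_range_succ, ih, Finset.sum_range_succ]
      have e' : M + 1 + 1 = M + 2 := by omega
      have e : u (M + 1 + 1) = u (M + 2) := by rw [e']
      rw [e]
      linear_combination ((u (M + 2) - u (M + 1)) ^ 2) * lam_eq M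

/-- Regrouping identity for the second (Hardy→weight) step. -/
private lemma stepB_regroup (u : ℕ → ℝ) (M : ℕ) :
    ∑ n ∈ Finset.range (M + 1),
        lam n * ((1 - bb n) * u (n + 2) ^ 2 + (1 - (bb n)⁻¹) * u (n + 1) ^ 2) =
      (∑ n ∈ Finset.range M,
          (lam n * (1 - bb n) + lam (n + 1) * (1 - (bb (n + 1))⁻¹)) * u (n + 2) ^ 2) +
        lam M * (1 - bb M) * u (M + 2) ^ 2 +
        lam 0 * (1 - (bb 0)⁻¹) * u 1 ^ 2 := by
  induction M with
  | zero => simp [Finset.sum_range_one]; ring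
  | succ M ih =>
      rw [Finset.sum_range_succ, ih, Finset.sum_range_succ]
      have e' : M + 1 + 1 = M + 2 := by omega
      have e : u (M + 1 + 1) = u (M + 2) := by rw [e']
      rw [e]
      ring

/-- Improved second order discrete Rellich inequality:
`∑_{n≥1} (Δu_n)² ≥ ∑_{n≥2} (9/(16n⁴) + 15/(16n⁵)) u_n²`. -/
theorem discrete_rellich_improved (u : ℕ → ℝ) (hfin : ∃ N, ∀ n ≥ N, u n = 0)
    (h0 : u 0 = 0) (h1 : u 1 = 0) :
    ∑' n : ℕ, (2 * u (n + 1) - u (n + 2) - u n) ^ 2 ≥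
      ∑' n : ℕ,
        (9 / (16 * ((n : ℝ) + 2) ^ 4) + 15 / (16 * ((n : ℝ) + 2) ^ 5)) * (u (n + 2)) ^ 2 := by
  obtain ⟨N, hN⟩ := hfin
  have hLHS : ∑' n : ℕ, (2 * u (n + 1) - u (n + 2) - u n) ^ 2 =
      ∑ n ∈ Finset.range (N + 2), (2 * u (n + 1) - u (n + 2) - u n) ^ 2 := by
    apply tsum_eq_sum
    intro n hn
    rw [Finset.mem_range, not_lt] at hn
    rw [hN n (by omega), hN (n + 1) (by omega), hN (n + 2) (by omega)]
    ring
  have hRHS : ∑' n : ℕ,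
      (9 / (16 * ((n : ℝ) + 2) ^ 4) + 15 / (16 * ((n : ℝ) + 2) ^ 5)) * (u (n + 2)) ^ 2 =
      ∑ n ∈ Finset.range (N + 2),
        (9 / (16 * ((n : ℝ) + 2) ^ 4) + 15 / (16 * ((n : ℝ) + 2) ^ 5)) * (u (n + 2)) ^ 2 := by
    apply tsum_eq_sum
    intro n hn
    rw [Finset.mem_range, not_lt] at hn
    rw [hN (n + 2) (by omega)]
    ring
  rw [hLHS, hRHS, ge_iff_le]
  -- boundary values
  have hzN2 : u (N + 2) = 0 := hN _ (by omega)
  have hzN3 : u (N + 3) = 0 := hN _ (by omega)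
  -- drop the last two (vanishing) terms of the target sum
  have key1 : ∑ n ∈ Finset.range (N + 2),
      (9 / (16 * ((n : ℝ) + 2) ^ 4) + 15 / (16 * ((n : ℝ) + 2) ^ 5)) * (u (n + 2)) ^ 2 =
      ∑ n ∈ Finset.range N,
        (9 / (16 * ((n : ℝ) + 2) ^ 4) + 15 / (16 * ((n : ℝ) + 2) ^ 5)) * (u (n + 2)) ^ 2 := by
    rw [Finset.sum_range_succ, Finset.sum_range_succ]
    have e1 : u (N + 2) = 0 := hzN2
    have e2 : u (N + 1 + 2) = 0 := by
      have : N + 1 + 2 = N + 3 := by omega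
      rw [this]; exact hzN3
    rw [e1, e2]
    ring
  -- step 2 : target weight ≤ produced weight, termwise
  have key2 : ∑ n ∈ Finset.range N,
      (9 / (16 * ((n : ℝ) + 2) ^ 4) + 15 / (16 * ((n : ℝ) + 2) ^ 5)) * (u (n + 2)) ^ 2 ≤
      ∑ n ∈ Finset.range N,
        (lam n * (1 - bb n) + lam (n + 1) * (1 - (bb (n + 1))⁻¹)) * u (n + 2) ^ 2 := by
    apply Finset.sum_le_sum
    intro n _
    exact mul_le_mul_of_nonneg_right (coef_ge n) (sq_nonneg _)
  -- step 3 : produced weight sum ≤ weighted Hardy sum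
  have hb2 : ∑ n ∈ Finset.range (N + 1),
        lam n * ((1 - bb n) * u (n + 2) ^ 2 + (1 - (bb n)⁻¹) * u (n + 1) ^ 2) ≤
      ∑ n ∈ Finset.range (N + 1), lam n * (u (n + 2) - u (n + 1)) ^ 2 := by
    apply Finset.sum_le_sum
    intro n _
    exact mul_le_mul_of_nonneg_left (amgm (bb n) (u (n + 2)) (u (n + 1)) (bb_pos n))
      (lam_nonneg n)
  have hb3 : ∑ n ∈ Finset.range (N + 1),
        lam n * ((1 - bb n) * u (n + 2) ^ 2 + (1 - (bb n)⁻¹) * u (n + 1) ^ 2) =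
      ∑ n ∈ Finset.range N,
        (lam n * (1 - bb n) + lam (n + 1) * (1 - (bb (n + 1))⁻¹)) * u (n + 2) ^ 2 := by
    rw [stepB_regroup u N, hzN2, h1]
    ring
  have key3 : ∑ n ∈ Finset.range N,
        (lam n * (1 - bb n) + lam (n + 1) * (1 - (bb (n + 1))⁻¹)) * u (n + 2) ^ 2 ≤
      ∑ n ∈ Finset.range (N + 1), lam n * (u (n + 2) - u (n + 1)) ^ 2 := by
    rw [← hb3]
    exact hb2
  -- step 4 : weighted Hardy sum ≤ Rellich sum
  have ha2 : ∑ n ∈ Finset.range (N + 2),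
        ((1 - aa n) * (u (n + 2) - u (n + 1)) ^ 2 + (1 - (aa n)⁻¹) * (u (n + 1) - u n) ^ 2) ≤
      ∑ n ∈ Finset.range (N + 2), (2 * u (n + 1) - u (n + 2) - u n) ^ 2 := by
    apply Finset.sum_le_sum
    intro n _
    have h := amgm (aa n) (u (n + 2) - u (n + 1)) (u (n + 1) - u n) (aa_pos n)
    have e2 : (u (n + 2) - u (n + 1) - (u (n + 1) - u n)) ^ 2 =
        (2 * u (n + 1) - u (n + 2) - u n) ^ 2 := by ring
    linarith
  have ha3 : ∑ n ∈ Finset.range (N + 2),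
        ((1 - aa n) * (u (n + 2) - u (n + 1)) ^ 2 + (1 - (aa n)⁻¹) * (u (n + 1) - u n) ^ 2) =
      ∑ n ∈ Finset.range (N + 1), lam n * (u (n + 2) - u (n + 1)) ^ 2 := by
    have e22 : N + 1 + 1 = N + 2 := by omega
    have h := stepA_regroup u (N + 1)
    rw [e22] at h
    have e1 : u (N + 1 + 2) = 0 := by
      have : N + 1 + 2 = N + 3 := by omega
      rw [this]; exact hzN3
    have e2 : u (N + 1 + 1) = 0 := by
      rw [e22]; exact hzN2
    rw [e1, e2, h1, h0] at h
    rw [h]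
    ring
  have key4 : ∑ n ∈ Finset.range (N + 1), lam n * (u (n + 2) - u (n + 1)) ^ 2 ≤
      ∑ n ∈ Finset.range (N + 2), (2 * u (n + 1) - u (n + 2) - u n) ^ 2 := by
    rw [← ha3]
    exact ha2
  calc ∑ n ∈ Finset.range (N + 2),
        (9 / (16 * ((n : ℝ) + 2) ^ 4) + 15 / (16 * ((n : ℝ) + 2) ^ 5)) * (u (n + 2)) ^ 2
      = ∑ n ∈ Finset.range N,
        (9 / (16 * ((n : ℝ) + 2) ^ 4) + 15 / (16 * ((n : ℝ) + 2) ^ 5)) * (u (n + 2)) ^ 2 := key1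
    _ ≤ ∑ n ∈ Finset.range N,
        (lam n * (1 - bb n) + lam (n + 1) * (1 - (bb (n + 1))⁻¹)) * u (n + 2) ^ 2 := key2
    _ ≤ ∑ n ∈ Finset.range (N + 1), lam n * (u (n + 2) - u (n + 1)) ^ 2 := key3
    _ ≤ ∑ n ∈ Finset.range (N + 2), (2 * u (n + 1) - u (n + 2) - u n) ^ 2 := key4
end
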